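/- arXiv:1306.6847 — 2 statements merged into one kernel-verified Lean document; each statement's English description precedes it below -/
import Mathlib

section
/- Let V be a type, let a, b ∈ V be distinct, and let C, D ⊆ V be sets such that {a}, {b}, C, D are pairwise disjoint. Let Γ be a simple graph on V such that every pair of adjacent vertices is, up to order, of one of the forms: (a, b); (a, d) with d ∈ D; (b, c) with c ∈ C; or (c, d) with c ∈ C and d ∈ D. Let θ be a real number with π/3 ≤ θ ≤ π/2, and let w : Sym2 V → ℝ be a weight function assigning the value 2θ to the edge {a, b} and to every edge {c, d} with c ∈ C, d ∈ D, and the value π − 2θ to every edge {a, d} with d ∈ D and every edge {b, c} with c ∈ C. Then for every cycle p of Γ, the sum of w over the edge list of p is at least 2π. -/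
open SimpleGraph

attribute [local instance] Classical.propDecidable

namespace LinkCycleAux

variable {V : Type*} {Γ : SimpleGraph V}

noncomputable def cross (f : V → Bool) : Sym2 V → Bool :=
  Sym2.lift ⟨fun x y => xor (f x) (f y), fun x y => Bool.xor_comm _ _⟩

@[simp] lemma cross_mk (f : V → Bool) (x y : V) : cross f s(x, y) = xor (f x) (f y) := rfl

lemma even_countP_cross (f : V → Bool) {x y : V} (q : Γ.Walk x y) :
    Even (q.edges.countP (cross f)) ↔ f x = f y := by
  induction q with
  | nil => simp
  | @cons u t y h q ih =>
    simp only [Walk.edges_cons, List.countP_cons, cross_mk]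
    obtain hu | hu := Bool.eq_false_or_eq_true (f u) <;>
    obtain ht | ht := Bool.eq_false_or_eq_true (f t) <;>
    obtain hy | hy := Bool.eq_false_or_eq_true (f y) <;>
      simp_all [Nat.even_add_one, Nat.even_add]

/-- In a path, at most one edge contains the start vertex. -/
lemma path_countP_start_le_one {x y : V} (q : Γ.Walk x y) (hq : q.IsPath) :
    q.edges.countP (fun e => decide (x ∈ e)) ≤ 1 := by
  induction q with
  | nil => simp
  | @cons u t y h q ih =>
    rw [Walk.cons_isPath_iff] at hq
    have h0 : q.edges.countP (fun e => decide (u ∈ e)) = 0 := by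
      rw [List.countP_eq_zero]
      intro e he
      simp only [decide_eq_true_eq]
      intro hmem
      obtain ⟨z, rfl⟩ := Sym2.mem_iff_exists.mp hmem
      exact hq.2 (q.fst_mem_support_of_mem_edges he)
    simp [List.countP_cons, h0]

lemma path_countP_end_le_one {x y : V} (q : Γ.Walk x y) (hq : q.IsPath) :
    q.edges.countP (fun e => decide (y ∈ e)) ≤ 1 := by
  have := path_countP_start_le_one q.reverse hq.reverse
  rwa [Walk.edges_reverse, List.countP_reverse] at this

lemma path_countP_le_two {x y : V} (q : Γ.Walk x y) (hq : q.IsPath) (z : V) :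
    q.edges.countP (fun e => decide (z ∈ e)) ≤ 2 := by
  induction q with
  | nil => simp
  | @cons u t y h q ih =>
    rw [Walk.cons_isPath_iff] at hq
    rw [Walk.edges_cons, List.countP_cons]
    by_cases hz : z ∈ (s(u, t) : Sym2 V)
    · rcases Sym2.mem_iff.mp hz with rfl | rfl
      · have h0 : q.edges.countP (fun e => decide (z ∈ e)) = 0 := by
          rw [List.countP_eq_zero]
          intro e he
          simp only [decide_eq_true_eq]
          intro hmem
          obtain ⟨w', rfl⟩ := Sym2.mem_iff_exists.mp hmem
          exact hq.2 (q.fst_mem_support_of_mem_edges he)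
        simp [h0]
      · have h1 := path_countP_start_le_one q hq.1
        rw [if_pos (decide_eq_true hz)]
        omega
    · rw [if_neg (by simpa using hz)]
      have := ih hq.1
      omega

lemma cycle_countP_le_two {v : V} (p : Γ.Walk v v) (hp : p.IsCycle) (z : V) :
    p.edges.countP (fun e => decide (z ∈ e)) ≤ 2 := by
  cases p with
  | nil => simp
  | @cons _ t _ h q =>
    rw [Walk.cons_isCycle_iff] at hp
    rw [Walk.edges_cons, List.countP_cons]
    by_cases hz : z ∈ (s(v, t) : Sym2 V)
    · rcases Sym2.mem_iff.mp hz with rfl | rfl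
      · have := path_countP_end_le_one q hp.1
        rw [if_pos (decide_eq_true hz)]
        omega
      · have := path_countP_start_le_one q hp.1
        rw [if_pos (decide_eq_true hz)]
        omega
    · rw [if_neg (by simpa using hz)]
      have := path_countP_le_two q hp.1 z
      omega

lemma countP_or_of_disjoint {α : Type*} (p q : α → Bool) (l : List α)
    (h : ∀ x ∈ l, ¬(p x = true ∧ q x = true)) :
    l.countP (fun x => p x || q x) = l.countP p + l.countP q := by
  induction l with
  | nil => simp
  | cons a l ih =>
    simp only [List.countP_cons]
    have ha := h a List.mem_cons_self
    rw [ih (fun x hx => h x (List.mem_cons_of_mem a hx))]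
    cases hpa : p a <;> cases hqa : q a <;> simp_all <;> omega

lemma sum_map_eq {α : Type*} (w : α → ℝ) (A B : ℝ) (P : α → Bool) (l : List α)
    (h : ∀ e ∈ l, w e = if P e then A else B) :
    (l.map w).sum = A * l.countP P + B * l.countP (fun e => !P e) := by
  induction l with
  | nil => simp
  | cons a l ih =>
    simp only [List.map_cons, List.sum_cons, List.countP_cons]
    rw [ih (fun e he => h e (List.mem_cons_of_mem a he)), h a List.mem_cons_self]
    cases hPa : P a <;> simp <;> ring

lemma countP_not_add {α : Type*} (P : α → Bool) (l : List α) :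
    l.countP P + l.countP (fun x => !P x) = l.length := by
  induction l with
  | nil => simp
  | cons a l ih =>
    simp only [List.countP_cons, List.length_cons]
    cases h : P a <;> simp [h] <;> omega

/-- every support vertex of a nonnil closed walk lies in the support tail -/
lemma mem_support_tail {v x : V} (p : Γ.Walk v v) (hnil : ¬p.Nil)
    (hx : x ∈ p.support) : x ∈ p.support.tail := by
  cases p with
  | nil => exact absurd Walk.nil_nil hnil
  | @cons _ t _ h q =>
    rw [Walk.support_cons] at hx ⊢
    simp only [List.tail_cons]
    rcases List.mem_cons.mp hx with rfl | hx
    · exact q.end_mem_support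
    · exact hx

end LinkCycleAux

open LinkCycleAux

/-- The paper's lemma on links of interior cone points: in a graph on
`{a} ∪ {b} ∪ C ∪ D` (pairwise disjoint) whose edges are of the forms `{a,b}`,
`{a,d}`, `{b,c}` or `{c,d}` (`c ∈ C`, `d ∈ D`), with weights `2θ` on edges
`{a,b}` and `{c,d}` and `π − 2θ` on edges `{a,d}` and `{b,c}`, where
`π/3 ≤ θ ≤ π/2`, every cycle has total weight at least `2π`. -/
theorem link_cycle_weight_ge_two_pi {V : Type*} (a b : V) (hab : a ≠ b)
    (C D : Set V) (haC : a ∉ C) (haD : a ∉ D) (hbC : b ∉ C) (hbD : b ∉ D)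
    (hCD : Disjoint C D) (Γ : SimpleGraph V)
    (hadj : ∀ x y, Γ.Adj x y →
      (x = a ∧ y = b) ∨ (x = b ∧ y = a) ∨
      (x = a ∧ y ∈ D) ∨ (x ∈ D ∧ y = a) ∨
      (x = b ∧ y ∈ C) ∨ (x ∈ C ∧ y = b) ∨
      (x ∈ C ∧ y ∈ D) ∨ (x ∈ D ∧ y ∈ C))
    (θ : ℝ) (hθ₁ : Real.pi / 3 ≤ θ) (hθ₂ : θ ≤ Real.pi / 2)
    (w : Sym2 V → ℝ)
    (hwab : Γ.Adj a b → w s(a, b) = 2 * θ)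
    (hwcd : ∀ c ∈ C, ∀ d ∈ D, Γ.Adj c d → w s(c, d) = 2 * θ)
    (hwad : ∀ d ∈ D, Γ.Adj a d → w s(a, d) = Real.pi - 2 * θ)
    (hwbc : ∀ c ∈ C, Γ.Adj b c → w s(b, c) = Real.pi - 2 * θ)
    {v : V} (p : Γ.Walk v v) (hp : p.IsCycle) :
    (p.edges.map w).sum ≥ 2 * Real.pi := by
  classical
  have hπ : (0:ℝ) < Real.pi := Real.pi_pos
  have hθpos : (0:ℝ) < θ := by linarith
  set f1 : V → Bool := fun x => decide (x = b ∨ x ∈ D) with hf1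
  set f2 : V → Bool := fun x => decide (x = b ∨ x ∈ C) with hf2
  -- values of the colorings
  have hf1a : f1 a = false := by simp [hf1, hab, haD]
  have hf1b : f1 b = true := by simp [hf1]
  have hf1c : ∀ c ∈ C, f1 c = false := by
    intro c hc
    have hcb : c ≠ b := fun h => hbC (h ▸ hc)
    have hcD : c ∉ D := fun h => (hCD.le_bot ⟨hc, h⟩)
    simp [hf1, hcb, hcD]
  have hf1d : ∀ d ∈ D, f1 d = true := by intro d hd; simp [hf1, hd]
  have hf2a : f2 a = false := by simp [hf2, hab, haC]
  have hf2b : f2 b = true := by simp [hf2]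
  have hf2c : ∀ c ∈ C, f2 c = true := by intro c hc; simp [hf2, hc]
  have hf2d : ∀ d ∈ D, f2 d = false := by
    intro d hd
    have hdb : d ≠ b := fun h => hbD (h ▸ hd)
    have hdC : d ∉ C := fun h => (hCD.le_bot ⟨h, hd⟩)
    simp [hf2, hdb, hdC]
  -- classification of an arbitrary edge of the graph
  have key : ∀ x y, Γ.Adj x y →
      cross f1 s(x, y) = true ∧
      ((cross f2 s(x, y) = true ∧ w s(x, y) = 2 * θ) ∨
        (cross f2 s(x, y) = false ∧ w s(x, y) = Real.pi - 2 * θ ∧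
          ((a ∈ s(x, y) ∧ b ∉ s(x, y)) ∨ (b ∈ s(x, y) ∧ a ∉ s(x, y))))) := by
    intro x y hxy
    have hmemab : ∀ z t : V, a ∈ s(z, t) ↔ (z = a ∨ t = a) := by
      intro z t; rw [Sym2.mem_iff]; constructor <;> rintro (h|h) <;> simp [h]
    rcases hadj x y hxy with ⟨rfl, rfl⟩ | ⟨rfl, rfl⟩ | ⟨rfl, hy⟩ | ⟨hx, rfl⟩ |
      ⟨rfl, hy⟩ | ⟨hx, rfl⟩ | ⟨hx, hy⟩ | ⟨hx, hy⟩
    · exact ⟨by simp [hf1a, hf1b], Or.inl ⟨by simp [hf2a, hf2b], hwab hxy⟩⟩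
    · refine ⟨by simp [hf1a, hf1b], Or.inl ⟨by simp [hf2a, hf2b], ?_⟩⟩
      rw [Sym2.eq_swap]; exact hwab hxy.symm
    · -- a, d
      refine ⟨by simp [hf1a, hf1d y hy], Or.inr ⟨by simp [hf2a, hf2d y hy], hwad y hy hxy, ?_⟩⟩
      left
      constructor
      · simp
      · simp only [Sym2.mem_iff]
        rintro (h | h)
        · exact hab h.symm
        · exact hbD (h ▸ hy)
    · -- d, a
      refine ⟨by simp [hf1a, hf1d x hx], Or.inr ⟨by simp [hf2a, hf2d x hx], ?_, ?_⟩⟩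
      · rw [Sym2.eq_swap]; exact hwad x hx hxy.symm
      · left
        constructor
        · simp
        · simp only [Sym2.mem_iff]
          rintro (h | h)
          · exact hbD (h ▸ hx)
          · exact hab h.symm
    · -- b, c
      refine ⟨by simp [hf1b, hf1c y hy], Or.inr ⟨by simp [hf2b, hf2c y hy], hwbc y hy hxy, ?_⟩⟩
      right
      constructor
      · simp
      · simp only [Sym2.mem_iff]
        rintro (h | h)
        · exact hab h
        · exact haC (h ▸ hy)
    · -- c, b
      refine ⟨by simp [hf1b, hf1c x hx], Or.inr ⟨by simp [hf2b, hf2c x hx], ?_, ?_⟩⟩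
      · rw [Sym2.eq_swap]; exact hwbc x hx hxy.symm
      · right
        constructor
        · simp
        · simp only [Sym2.mem_iff]
          rintro (h | h)
          · exact haC (h ▸ hx)
          · exact hab h
    · -- c, d
      exact ⟨by simp [hf1c x hx, hf1d y hy],
        Or.inl ⟨by simp [hf2c x hx, hf2d y hy], hwcd x hx y hy hxy⟩⟩
    · -- d, c
      refine ⟨by simp [hf1d x hx, hf1c y hy], Or.inl ⟨by simp [hf2d x hx, hf2c y hy], ?_⟩⟩
      rw [Sym2.eq_swap]; exact hwcd y hy x hx hxy.symm
  have hclass : ∀ e ∈ p.edges,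
      cross f1 e = true ∧
      ((cross f2 e = true ∧ w e = 2 * θ) ∨
        (cross f2 e = false ∧ w e = Real.pi - 2 * θ ∧
          ((a ∈ e ∧ b ∉ e) ∨ (b ∈ e ∧ a ∉ e)))) := by
    intro e he
    induction e using Sym2.ind with
    | _ x y => exact key x y (Γ.mem_edgeSet.mp (p.edges_subset_edgeSet he))
  set E := p.edges with hE
  set n := p.length with hn
  have hElen : E.length = n := p.length_edges
  set L := E.countP (cross f2) with hL
  set S := E.countP (fun e => !cross f2 e) with hS
  have hLS : L + S = n := by
    rw [hL, hS, ← hElen]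
    exact countP_not_add (cross f2) E
  have hn3 : 3 ≤ n := hp.three_le_length
  -- n is even
  have hneven : Even n := by
    have h1 : E.countP (cross f1) = E.length := by
      rw [List.countP_eq_length]
      intro e he
      exact (hclass e he).1
    have := (even_countP_cross f1 p).mpr rfl
    rwa [← hE, h1, hElen] at this
  -- L is even
  have hLeven : Even L := (even_countP_cross f2 p).mpr rfl
  -- the sum
  have hsum : (E.map w).sum = 2 * θ * L + (Real.pi - 2 * θ) * S := by
    apply sum_map_eq
    intro e he
    rcases (hclass e he).2 with ⟨h1, h2⟩ | ⟨h1, h2, _⟩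
    · rw [h1, if_pos rfl]; exact h2
    · rw [h1]; simpa using h2
  -- splitting the short edges
  set sa : Sym2 V → Bool := fun e => !cross f2 e && decide (a ∈ e) with hsa
  set sb : Sym2 V → Bool := fun e => !cross f2 e && decide (b ∈ e) with hsb
  have hSsplit : S = E.countP sa + E.countP sb := by
    rw [hS, ← countP_or_of_disjoint]
    · apply List.countP_congr
      intro e he
      rcases (hclass e he).2 with ⟨h1, _⟩ | ⟨h1, _, hm⟩
      · simp [hsa, hsb, h1]
      · rcases hm with ⟨hma, hmb⟩ | ⟨hmb, hma⟩ <;> simp [hsa, hsb, h1, hma, hmb]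
    · intro e he
      rintro ⟨h1, h2⟩
      rw [hsa] at h1; rw [hsb] at h2
      simp only [Bool.and_eq_true, decide_eq_true_eq] at h1 h2
      rcases (hclass e he).2 with ⟨hc, _⟩ | ⟨_, _, hm⟩
      · simp [hc] at h1
      · rcases hm with ⟨_, hmb⟩ | ⟨_, hma⟩
        · exact hmb h2.2
        · exact hma h1.2
  have hka : E.countP sa ≤ 2 := by
    calc E.countP sa ≤ E.countP (fun e => decide (a ∈ e)) := by
          apply List.countP_mono_left
          intro e _ h
          rw [hsa] at h
          simp only [Bool.and_eq_true] at h
          exact h.2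
      _ ≤ 2 := cycle_countP_le_two p hp a
  have hkb : E.countP sb ≤ 2 := by
    calc E.countP sb ≤ E.countP (fun e => decide (b ∈ e)) := by
          apply List.countP_mono_left
          intro e _ h
          rw [hsb] at h
          simp only [Bool.and_eq_true] at h
          exact h.2
      _ ≤ 2 := cycle_countP_le_two p hp b
  have hS4 : S ≤ 4 := by omega
  have hSeven : Even S := by
    obtain ⟨k, hk⟩ := hneven
    obtain ⟨m, hm⟩ := hLeven
    exact ⟨k - m, by omega⟩
  -- the hard case: S = 4 implies n ≥ 6
  have hn6 : S = 4 → 6 ≤ n := by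
    intro hS4'
    have hka2 : E.countP sa = 2 := by omega
    have hkb2 : E.countP sb = 2 := by omega
    -- extract the two short edges at a
    have extract : ∀ (x : V) (sx : Sym2 V → Bool), sx = (fun e => !cross f2 e && decide (x ∈ e)) →
        E.countP sx = 2 →
        ∃ e1 e2, e1 ≠ e2 ∧ e1 ∈ E ∧ e2 ∈ E ∧ sx e1 = true ∧ sx e2 = true := by
      intro x sx hsx hcount
      have hlen : (E.filter sx).length = 2 := by
        rw [← List.countP_eq_length_filter]; exact hcount
      obtain ⟨e1, e2, hfe⟩ := List.length_eq_two.mp hlen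
      have hnd : (E.filter sx).Nodup := (hp.isTrail.edges_nodup).filter sx
      rw [hfe] at hnd
      have h1 : e1 ∈ E.filter sx := by rw [hfe]; simp
      have h2 : e2 ∈ E.filter sx := by rw [hfe]; simp
      rw [List.mem_filter] at h1 h2
      exact ⟨e1, e2, by simpa using hnd, h1.1, h2.1, h1.2, h2.2⟩
    obtain ⟨ea1, ea2, hane, hae1, hae2, hsa1, hsa2⟩ := extract a sa hsa hka2
    obtain ⟨eb1, eb2, hbne, hbe1, hbe2, hsb1, hsb2⟩ := extract b sb hsb hkb2
    -- a short edge containing a is of the form s(a, d) with d ∈ D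
    have geta : ∀ e ∈ E, sa e = true → ∃ d ∈ D, e = s(a, d) := by
      intro e he hsae
      rw [hsa] at hsae
      simp only [Bool.and_eq_true, decide_eq_true_eq, Bool.not_eq_true'] at hsae
      obtain ⟨d, rfl⟩ := Sym2.mem_iff_exists.mp hsae.2
      have hadj' : Γ.Adj a d := Γ.mem_edgeSet.mp (p.edges_subset_edgeSet he)
      rcases hadj a d hadj' with ⟨_, hdb⟩ | ⟨h, _⟩ | ⟨_, hd⟩ | ⟨h, _⟩ |
        ⟨h, _⟩ | ⟨h, _⟩ | ⟨h, _⟩ | ⟨h, _⟩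
      · exfalso; have : cross f2 s(a, d) = true := by
          have : f2 d = true := by rw [hdb]; exact hf2b
          simp [hf2a, this]
        rw [hsae.1] at this; exact Bool.false_ne_true this
      · exact absurd h hab
      · exact ⟨d, hd, rfl⟩
      · exact absurd h haD
      · exact absurd h hab
      · exact absurd h haC
      · exact absurd h haC
      · exact absurd h haD
    have getb : ∀ e ∈ E, sb e = true → ∃ c ∈ C, e = s(b, c) := by
      intro e he hsbe
      rw [hsb] at hsbe
      simp only [Bool.and_eq_true, decide_eq_true_eq, Bool.not_eq_true'] at hsbe
      obtain ⟨c, rfl⟩ := Sym2.mem_iff_exists.mp hsbe.2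
      have hadj' : Γ.Adj b c := Γ.mem_edgeSet.mp (p.edges_subset_edgeSet he)
      rcases hadj b c hadj' with ⟨h, _⟩ | ⟨_, hca⟩ | ⟨h, _⟩ | ⟨h, _⟩ |
        ⟨_, hc⟩ | ⟨h, _⟩ | ⟨h, _⟩ | ⟨h, _⟩
      · exact absurd h.symm hab
      · exfalso; have : cross f2 s(b, c) = true := by
          have : f2 c = false := by rw [hca]; exact hf2a
          simp [hf2b, this]
        rw [hsbe.1] at this; exact Bool.false_ne_true this
      · exact absurd h.symm hab
      · exact absurd h hbD
      · exact ⟨c, hc, rfl⟩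
      · exact absurd h hbC
      · exact absurd h hbC
      · exact absurd h hbD
    obtain ⟨d1, hd1, rfl⟩ := geta ea1 hae1 hsa1
    obtain ⟨d2, hd2, rfl⟩ := geta ea2 hae2 hsa2
    obtain ⟨c1, hc1, rfl⟩ := getb eb1 hbe1 hsb1
    obtain ⟨c2, hc2, rfl⟩ := getb eb2 hbe2 hsb2
    have hd12 : d1 ≠ d2 := fun h => hane (by rw [h])
    have hc12 : c1 ≠ c2 := fun h => hbne (by rw [h])
    -- all six vertices are in the support tail
    have hnil : ¬p.Nil := hp.not_nil
    have hmem : ∀ x : V, x ∈ p.support → x ∈ p.support.tail :=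
      fun x hx => mem_support_tail p hnil hx
    have hma : a ∈ p.support.tail := hmem a (p.fst_mem_support_of_mem_edges hae1)
    have hmb : b ∈ p.support.tail := hmem b (p.fst_mem_support_of_mem_edges hbe1)
    have hmd1 : d1 ∈ p.support.tail := hmem d1 (p.snd_mem_support_of_mem_edges hae1)
    have hmd2 : d2 ∈ p.support.tail := hmem d2 (p.snd_mem_support_of_mem_edges hae2)
    have hmc1 : c1 ∈ p.support.tail := hmem c1 (p.snd_mem_support_of_mem_edges hbe1)
    have hmc2 : c2 ∈ p.support.tail := hmem c2 (p.snd_mem_support_of_mem_edges hbe2)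
    -- distinctness
    have hCD' : ∀ x ∈ C, ∀ y ∈ D, x ≠ y := fun x hx y hy h => hCD.le_bot ⟨hx, h ▸ hy⟩
    have had1 : a ≠ d1 := fun h => haD (h ▸ hd1)
    have had2 : a ≠ d2 := fun h => haD (h ▸ hd2)
    have hac1 : a ≠ c1 := fun h => haC (h ▸ hc1)
    have hac2 : a ≠ c2 := fun h => haC (h ▸ hc2)
    have hbd1 : b ≠ d1 := fun h => hbD (h ▸ hd1)
    have hbd2 : b ≠ d2 := fun h => hbD (h ▸ hd2)
    have hbc1 : b ≠ c1 := fun h => hbC (h ▸ hc1)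
    have hbc2 : b ≠ c2 := fun h => hbC (h ▸ hc2)
    have hd1c1 : d1 ≠ c1 := fun h => hCD' c1 hc1 d1 hd1 h.symm
    have hd1c2 : d1 ≠ c2 := fun h => hCD' c2 hc2 d1 hd1 h.symm
    have hd2c1 : d2 ≠ c1 := fun h => hCD' c1 hc1 d2 hd2 h.symm
    have hd2c2 : d2 ≠ c2 := fun h => hCD' c2 hc2 d2 hd2 h.symm
    have hl6 : ([a, b, d1, d2, c1, c2] : List V).Nodup := by
      simp [List.nodup_cons, hab, had1, had2, hac1, hac2, hbd1, hbd2, hbc1, hbc2,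
        hd12, hd1c1, hd1c2, hd2c1, hd2c2, hc12]
    have hsub : ([a, b, d1, d2, c1, c2] : List V).toFinset ⊆ p.support.tail.toFinset := by
      intro x hx
      rw [List.mem_toFinset] at hx ⊢
      fin_cases hx
      · exact hma
      · exact hmb
      · exact hmd1
      · exact hmd2
      · exact hmc1
      · exact hmc2
    have h6card : ([a, b, d1, d2, c1, c2] : List V).toFinset.card = 6 := by
      rw [List.toFinset_card_of_nodup hl6]
      rfl
    have htail : p.support.tail.length = n := by
      have h := p.length_support
      rw [List.length_tail, h]
      omega
    calc 6 = ([a, b, d1, d2, c1, c2] : List V).toFinset.card := h6card.symm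
      _ ≤ p.support.tail.toFinset.card := Finset.card_le_card hsub
      _ ≤ p.support.tail.length := p.support.tail.toFinset_card_le
      _ = n := htail
  -- final arithmetic
  rw [hsum]
  obtain ⟨k, hk⟩ := hSeven
  have hScases : S = 0 ∨ S = 2 ∨ S = 4 := by omega
  rcases hScases with h | h | h
  · have hL4 : 4 ≤ L := by
      obtain ⟨m, hm⟩ := hLeven
      omega
    have : (4:ℝ) ≤ (L:ℝ) := by exact_mod_cast hL4
    rw [h]
    push_cast
    nlinarith
  · have hL2 : 2 ≤ L := by
      obtain ⟨m, hm⟩ := hLeven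
      omega
    have : (2:ℝ) ≤ (L:ℝ) := by exact_mod_cast hL2
    rw [h]
    push_cast
    nlinarith
  · have h6 := hn6 h
    have hL2 : 2 ≤ L := by omega
    have : (2:ℝ) ≤ (L:ℝ) := by exact_mod_cast hL2
    rw [h]
    push_cast
    nlinarith
end

section
/- Let V be a type and let A, B, C ⊆ V be pairwise disjoint sets with A ∪ B ∪ C = V. Let Γ be a simple graph on V such that every pair of adjacent vertices consists, up to order, of one vertex of A and one vertex of B, or of one vertex of B and one vertex of C. Assume that every vertex of A has degree at most 1 in Γ, and that any two distinct vertices of C have at most one common neighbour. Then every cycle of Γ visits only vertices of B ∪ C and has at least 6 edges. Consequently, if θ is a real number with θ > π/3 and w : Sym2 V → ℝ is a weight function with w(e) ≥ θ for every edge e of Γ joining a vertex of B and a vertex of C, then the sum of w over the edge list of every cycle of Γ is strictly greater than 2π. -/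
open SimpleGraph

private lemma two_neighbors {V : Type*} {Γ : SimpleGraph V} {x : V} {q : Γ.Walk x x}
    (hq : q.IsCycle) : ∃ y z, y ≠ z ∧ Γ.Adj x y ∧ Γ.Adj x z := by
  cases q with
  | nil => exact absurd hq Walk.IsCycle.not_of_nil
  | cons h r =>
    rename_i y
    have hr := (Walk.cons_isCycle_iff r h).mp hq
    cases hrev : r.reverse with
    | nil =>
      exfalso
      have h1 : r.length = 0 := by simpa using congrArg Walk.length hrev
      have h3 := hq.three_le_length
      simp [Walk.length_cons, h1] at h3
    | cons h' r' =>
      rename_i z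
      have hedges : r.edges.reverse = s(x, z) :: r'.edges := by
        rw [← Walk.edges_reverse, hrev, Walk.edges_cons]
      have hmem : s(x, z) ∈ r.edges := by
        have : s(x, z) ∈ r.edges.reverse := by rw [hedges]; exact List.mem_cons_self
        simpa using this
      refine ⟨y, z, ?_, h, h'⟩
      rintro rfl
      exact hr.2 hmem

/-- The paper's lemma on links of Bass–Serre vertices: in a tripartite graph on
`A ∪ B ∪ C` whose edges join `A` to `B` or `B` to `C`, where vertices of `A`
have degree at most one and two distinct vertices of `C` have at most one
common neighbour, every cycle stays in `B ∪ C` and has at least `6` edges;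
consequently, for `θ > π/3` and any weight function which is at least `θ` on
every `B`–`C` edge, every cycle has total weight strictly greater than `2π`. -/
theorem tripartite_link_cycle_bound {V : Type*} (A B C : Set V)
    (hAB : Disjoint A B) (hAC : Disjoint A C) (hBC : Disjoint B C)
    (hcover : A ∪ B ∪ C = Set.univ) (Γ : SimpleGraph V)
    (hadj : ∀ x y, Γ.Adj x y →
      (x ∈ A ∧ y ∈ B) ∨ (x ∈ B ∧ y ∈ A) ∨ (x ∈ B ∧ y ∈ C) ∨ (x ∈ C ∧ y ∈ B))
    (hdegA : ∀ x ∈ A, ∀ y z, Γ.Adj x y → Γ.Adj x z → y = z)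
    (hcommon : ∀ c ∈ C, ∀ c' ∈ C, c ≠ c' →
      ∀ y z, Γ.Adj c y → Γ.Adj c' y → Γ.Adj c z → Γ.Adj c' z → y = z) :
    (∀ (v : V) (p : Γ.Walk v v), p.IsCycle →
        (∀ x ∈ p.support, x ∈ B ∪ C) ∧ 6 ≤ p.edges.length) ∧
    (∀ θ : ℝ, Real.pi / 3 < θ →
      ∀ w : Sym2 V → ℝ,
        (∀ x y, Γ.Adj x y → x ∈ B → y ∈ C → θ ≤ w s(x, y)) →
        ∀ (v : V) (p : Γ.Walk v v), p.IsCycle →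
          2 * Real.pi < (p.edges.map w).sum) := by
  classical
  -- an edge between two vertices of `B ∪ C` is a `B`–`C` edge
  have hedgeBC : ∀ x y, Γ.Adj x y → x ∈ B ∪ C → y ∈ B ∪ C →
      (x ∈ B ∧ y ∈ C) ∨ (x ∈ C ∧ y ∈ B) := by
    intro x y h hx hy
    have hxA : x ∉ A := by
      rcases hx with hx | hx
      · exact fun hA => Set.disjoint_left.mp hAB hA hx
      · exact fun hA => Set.disjoint_left.mp hAC hA hx
    have hyA : y ∉ A := by
      rcases hy with hy | hy
      · exact fun hA => Set.disjoint_left.mp hAB hA hy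
      · exact fun hA => Set.disjoint_left.mp hAC hA hy
    rcases hadj x y h with ⟨h1, _⟩ | ⟨_, h2⟩ | hc | hc
    · exact absurd h1 hxA
    · exact absurd h2 hyA
    · exact Or.inl hc
    · exact Or.inr hc
  -- every vertex on a cycle lies in `B ∪ C`
  have hsuppBC : ∀ (v : V) (p : Γ.Walk v v), p.IsCycle → ∀ x ∈ p.support, x ∈ B ∪ C := by
    intro v p hp x hx
    obtain ⟨y, z, hyz, hxy, hxz⟩ := two_neighbors (hp.rotate hx)
    by_contra hxBC
    have hxA : x ∈ A := by
      have hxu : x ∈ A ∪ B ∪ C := hcover.symm ▸ Set.mem_univ x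
      rcases hxu with (hx' | hx') | hx'
      · exact hx'
      · exact absurd (Or.inl hx') hxBC
      · exact absurd (Or.inr hx') hxBC
    exact hyz (hdegA x hxA y z hxy hxz)
  -- parity: walks inside `B ∪ C` have even length when closed
  have parity : ∀ (u u' : V) (p : Γ.Walk u u'), (∀ x ∈ p.support, x ∈ B ∪ C) →
      ((if u ∈ C then (1 : ZMod 2) else 0) + p.length
        = (if u' ∈ C then (1 : ZMod 2) else 0)) := by
    intro u u' p
    induction p with
    | nil => intro _; simp
    | @cons a b c h q ih =>
      intro hs
      have ha : a ∈ B ∪ C := hs a (by simp)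
      have hb : b ∈ B ∪ C := hs b (by simp [Walk.support_cons, q.start_mem_support])
      have ih' := ih fun x hx => hs x (by simp [Walk.support_cons]; exact Or.inr hx)
      rw [Walk.length_cons]
      push_cast
      rcases hedgeBC a b h ha hb with ⟨h1, h2⟩ | ⟨h1, h2⟩
      · have ha' : a ∉ C := fun hc => Set.disjoint_left.mp hBC h1 hc
        rw [if_neg ha'] at *
        rw [if_pos h2] at ih'
        rw [← ih']
        ring
      · have hb' : b ∉ C := fun hc => Set.disjoint_left.mp hBC h2 hc
        rw [if_pos h1] at *
        rw [if_neg hb'] at ih'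
        rw [← ih', zero_add]
        calc (1 : ZMod 2) + (↑q.length + 1) = ↑q.length + (1 + 1) := by ring
          _ = ↑q.length := by rw [show (1 : ZMod 2) + 1 = 0 by decide, add_zero]
  -- the first claim
  have key : ∀ (v : V) (p : Γ.Walk v v), p.IsCycle →
      (∀ x ∈ p.support, x ∈ B ∪ C) ∧ 6 ≤ p.edges.length := by
    intro v p hp
    have hsupp := hsuppBC v p hp
    refine ⟨hsupp, ?_⟩
    rw [Walk.length_edges]
    have hlen3 := hp.three_le_length
    have heven : Even p.length := by
      have h0 := parity v v p hsupp
      have : (p.length : ZMod 2) = 0 := by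
        have h0' : (if v ∈ C then (1 : ZMod 2) else 0) + ↑p.length
            = (if v ∈ C then (1 : ZMod 2) else 0) + 0 := by rw [add_zero, h0]
        exact add_left_cancel h0'
      have h2 : (2 : ℕ) ∣ p.length := by
        exact (ZMod.natCast_eq_zero_iff _ 2).mp this
      exact even_iff_two_dvd.mpr h2
    have h4 : p.length ≠ 4 := by
      intro h4
      cases p with
      | nil => simp at h4
      | @cons _ a _ h1 p =>
        cases p with
        | nil => simp at h4
        | @cons _ b _ h2 p =>
          cases p with
          | nil => simp at h4
          | @cons _ c _ h3 p =>
            cases p with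
            | nil => simp at h4
            | @cons _ d _ h5 p =>
              cases p with
              | cons h6 p => simp [Walk.length_cons] at h4
              | nil =>
                -- walk v → a → b → c → v
                clear h4
                have hnd : (Walk.cons h1 (Walk.cons h2 (Walk.cons h3
                    (Walk.cons h5 Walk.nil)))).support.tail.Nodup :=
                  ((Walk.isCycle_def _).mp hp).2.2
                simp [Walk.support_cons] at hnd
                have hac : a ≠ c := hnd.1.2.1
                have hbv : b ≠ v := hnd.2.1.2
                have hv : v ∈ B ∪ C := hsupp v (by simp)
                have ha : a ∈ B ∪ C := hsupp a (by simp [Walk.support_cons])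
                have hb : b ∈ B ∪ C := hsupp b (by simp [Walk.support_cons])
                have hc : c ∈ B ∪ C := hsupp c (by simp [Walk.support_cons])
                rcases hedgeBC v a h1 hv ha with ⟨hvB, haC⟩ | ⟨hvC, haB⟩
                · have hbB : b ∈ B := by
                    rcases hedgeBC a b h2 ha hb with ⟨haB, _⟩ | ⟨_, hbB⟩
                    · exact absurd haC (fun hc' => Set.disjoint_left.mp hBC haB hc')
                    · exact hbB
                  have hcC : c ∈ C := by
                    rcases hedgeBC b c h3 hb hc with ⟨_, hcC⟩ | ⟨hbC, _⟩
                    · exact hcC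
                    · exact absurd hbC (fun hc' => Set.disjoint_left.mp hBC hbB hc')
                  exact hbv.symm (hcommon a haC c hcC hac v b h1.symm h5 h2 h3.symm)
                · have hbC : b ∈ C := by
                    rcases hedgeBC a b h2 ha hb with ⟨_, hbC⟩ | ⟨haC, _⟩
                    · exact hbC
                    · exact absurd haC (fun hc' => Set.disjoint_left.mp hBC haB hc')
                  have hcB : c ∈ B := by
                    rcases hedgeBC b c h3 hb hc with ⟨hbB, _⟩ | ⟨_, hcB⟩
                    · exact absurd hbB (fun hb' => Set.disjoint_left.mp hBC hb' hbC)
                    · exact hcB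
                  exact hac (hcommon v hvC b hbC (Ne.symm hbv) a c h1 h2.symm h5.symm h3)
    obtain ⟨k, hk⟩ := heven
    omega
  refine ⟨key, ?_⟩
  intro θ hθ w hw v p hp
  obtain ⟨hsupp, h6⟩ := key v p hp
  have hθ0 : 0 < θ := lt_trans (by positivity) hθ
  have heach : ∀ e ∈ p.edges, θ ≤ w e := by
    intro e he
    induction e using Sym2.ind with
    | _ x y =>
      have hadj' : Γ.Adj x y := Walk.adj_of_mem_edges p he
      have hx : x ∈ B ∪ C := hsupp x (p.fst_mem_support_of_mem_edges he)
      have hy : y ∈ B ∪ C := hsupp y (p.snd_mem_support_of_mem_edges he)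
      rcases hedgeBC x y hadj' hx hy with ⟨h1, h2⟩ | ⟨h1, h2⟩
      · exact hw x y hadj' h1 h2
      · rw [Sym2.eq_swap]
        exact hw y x hadj'.symm h2 h1
  have hsum : (p.edges.length : ℝ) * θ ≤ (p.edges.map w).sum := by
    have := List.sum_le_sum (l := p.edges) (f := fun _ => θ) (g := w) (fun e he => heach e he)
    calc (p.edges.length : ℝ) * θ = (p.edges.map fun _ => θ).sum := by
            rw [List.map_const', List.sum_replicate, nsmul_eq_mul]
      _ ≤ (p.edges.map w).sum := this
  calc 2 * Real.pi = 6 * (Real.pi / 3) := by ring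
    _ < 6 * θ := by linarith
    _ ≤ (p.edges.length : ℝ) * θ := by
        apply mul_le_mul_of_nonneg_right _ hθ0.le
        exact_mod_cast h6
    _ ≤ (p.edges.map w).sum := hsum
end
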